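/- Let n ≥ 3 and 0 ≤ k ≤ n−2. In the spindle at k over {1,…,n−1}, each value v ∈ {1,…,n−1} occurs exactly |v − (k+1)| + 1 times in the underlying sequence. -/

import Mathlib

/-- The underlying sequence of a dot graph given as a list of ascending
segments `(p, q)`: segment `(p, q)` contributes `p, p+1, …, q`. -/
def toSeq (L : List (ℕ × ℕ)) : List ℕ :=
  L.flatMap fun s => List.range' s.1 (s.2 - s.1 + 1)

/-- `L` is the list of maximal ascending segments of a sawtooth dot graph over
`{1, …, n-1}`: `1 ≤ pᵢ ≤ qᵢ ≤ n-1` for all `i`, and `p_{i+1} ≤ q_i` for all `i`. -/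
def IsSawtooth (n : ℕ) (L : List (ℕ × ℕ)) : Prop :=
  (∀ s ∈ L, 1 ≤ s.1 ∧ s.1 ≤ s.2 ∧ s.2 ≤ n - 1) ∧
  ∀ (i : ℕ) (h : i + 1 < L.length),
    (L.get ⟨i + 1, h⟩).1 ≤ (L.get ⟨i, Nat.lt_of_succ_lt h⟩).2

/-- A sawtooth dot graph (given by its segment list) is dot reducible if it
contains a horizontal line, a box, a hexagon of type 1 or 2, a double box, or
a double hexagon. -/
def DotReducible (L : List (ℕ × ℕ)) : Prop :=
  -- horizontal line
  (∃ (i : ℕ) (h : i + 1 < L.length),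
      (L.get ⟨i, Nat.lt_of_succ_lt h⟩).2 = (L.get ⟨i + 1, h⟩).1) ∨
  -- box
  (∃ i j : Fin L.length, i < j ∧
      (L.get i).1 ≤ (L.get j).1 ∧ (L.get i).2 ≤ (L.get j).2) ∨
  -- hexagon of type 1
  (∃ i j l : Fin L.length, i < j ∧ j < l ∧
      (L.get i).1 ≤ (L.get j).1 ∧ (L.get i).2 ≤ (L.get l).2 ∧
      (L.get l).1 ≤ (L.get j).2) ∨
  -- hexagon of type 2
  (∃ i j l : Fin L.length, i < j ∧ j < l ∧
      (L.get i).1 ≤ (L.get l).1 ∧ (L.get j).2 ≤ (L.get l).2 ∧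
      (L.get j).1 ≤ (L.get i).2) ∨
  -- double box
  (∃ i j l : Fin L.length, i < j ∧ j < l ∧
      (L.get i).2 ≤ (L.get j).2 ∧ (L.get j).1 ≤ (L.get l).1 ∧
      (L.get i).1 ≤ (L.get l).2 + 1) ∨
  -- double hexagon
  (∃ i j l m : Fin L.length, i < j ∧ j ≤ l ∧ l < m ∧
      (L.get i).1 ≤ (L.get j).1 ∧ (L.get l).2 ≤ (L.get m).2)

/-- The spindle at `k` over `{1, …, n-1}`: segments `(s, n-1)` for
`s = n-1` down to `k+2`, then `(1, n-1)`, then `(1, t)` for `t = k` down to `1`. -/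
def spindle (n k : ℕ) : List (ℕ × ℕ) :=
  ((List.range (n - 2 - k)).map fun i => (n - 1 - i, n - 1)) ++
    [(1, n - 1)] ++
    ((List.range k).map fun i => (1, k - i))

/-- `L` is a maximal dot irreducible sawtooth dot graph over `{1, …, n-1}`:
it is dot irreducible, and every sawtooth dot graph over `{1, …, n-1}`
containing it as a proper subsequence is dot reducible. -/
def MaxDotIrreducible (n : ℕ) (L : List (ℕ × ℕ)) : Prop :=
  IsSawtooth n L ∧ ¬ DotReducible L ∧
  ∀ M : List (ℕ × ℕ), IsSawtooth n M → List.Sublist (toSeq L) (toSeq M) →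
    toSeq L ≠ toSeq M → DotReducible M

lemma count_range'' (v s l : ℕ) :
    (List.range' s l).count v = if s ≤ v ∧ v < s + l then 1 else 0 := by
  rw [List.Nodup.count (List.nodup_range' ..)]
  simp only [List.mem_range']
  congr 1
  simp only [eq_iff_iff]
  constructor
  · rintro ⟨i, hi, rfl⟩; omega
  · intro h; exact ⟨v - s, by omega, by omega⟩

lemma toSeq_append (A B : List (ℕ × ℕ)) : toSeq (A ++ B) = toSeq A ++ toSeq B :=
  List.flatMap_append ..

lemma countA (n v : ℕ) (hv : v ≤ n - 1) :
    ∀ m, m ≤ n - 2 →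
      (toSeq ((List.range m).map fun i => (n - 1 - i, n - 1))).count v
        = m - (n - 1 - v) := by
  intro m
  induction m with
  | zero => intro _; simp [toSeq]
  | succ m ih =>
    intro hm
    rw [List.range_succ, List.map_append, toSeq_append, List.count_append,
      ih (by omega)]
    simp only [List.map_cons, List.map_nil, toSeq, List.flatMap_cons,
      List.flatMap_nil, List.append_nil, count_range'']
    have : n - 1 - m ≤ v ∧ v < n - 1 - m + (n - 1 - (n - 1 - m) + 1)
        ↔ n - 1 - m ≤ v := by omega
    rw [if_congr this rfl rfl]
    split <;> omega

lemma countB (k v : ℕ) (hv : 1 ≤ v) :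
    ∀ m, m ≤ k →
      (toSeq ((List.range m).map fun i => (1, k - i))).count v
        = min m (k + 1 - v) := by
  intro m
  induction m with
  | zero => intro _; simp [toSeq]
  | succ m ih =>
    intro hm
    rw [List.range_succ, List.map_append, toSeq_append, List.count_append,
      ih (by omega)]
    simp only [List.map_cons, List.map_nil, toSeq, List.flatMap_cons,
      List.flatMap_nil, List.append_nil, count_range'']
    have : 1 ≤ v ∧ v < 1 + (k - m - 1 + 1) ↔ v ≤ k - m := by omega
    rw [if_congr this rfl rfl]
    split <;> omega

theorem spindle_count' (n k : ℕ) (hn : 3 ≤ n) (hk : k ≤ n - 2) :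
    ∀ v : ℕ, 1 ≤ v → v ≤ n - 1 →
      (toSeq (((List.range (n - 2 - k)).map fun i => (n - 1 - i, n - 1)) ++
        [(1, n - 1)] ++
        ((List.range k).map fun i => (1, k - i)))).count v
        = ((v : ℤ) - (k + 1)).natAbs + 1 := by
  intro v hv1 hv2
  rw [toSeq_append, toSeq_append, List.count_append, List.count_append,
    countA n v hv2 _ (by omega), countB k v hv1 _ le_rfl]
  simp only [toSeq, List.flatMap_cons, List.flatMap_nil, List.append_nil,
    count_range'']
  rw [if_pos (by omega)]
  omega

/-- In the spindle at `k` over `{1, …, n-1}`, each value `v ∈ {1, …, n-1}`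
occurs exactly `|v - (k+1)| + 1` times in the underlying sequence. -/
theorem spindle_count (n k : ℕ) (hn : 3 ≤ n) (hk : k ≤ n - 2) :
    ∀ v : ℕ, 1 ≤ v → v ≤ n - 1 →
      (toSeq (spindle n k)).count v = ((v : ℤ) - (k + 1)).natAbs + 1 :=
  spindle_count' n k hn hk
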